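/- Let Γ be a linearly ordered abelian group and H ⊊ H' two convex subgroups of Γ. Then H and H' are adjacent (there is no convex subgroup K with H ⊊ K ⊊ H') if and only if there exists γ ∈ Γ with γ > 0 such that H = {x ∈ Γ : ∀ n ∈ ℕ, n•|x| < γ} and H' = {x ∈ Γ : ∃ n ∈ ℕ, |x| ≤ n•γ}, where |x| = max(x, −x). -/

import Mathlib

/-- A convex additive subgroup. -/
def AddSubgroup.IsConvex {Γ : Type*} [AddCommGroup Γ] [LinearOrder Γ] [IsOrderedAddMonoid Γ] (H : AddSubgroup Γ) : Prop :=
  ∀ x h : Γ, h ∈ H → 0 ≤ x → x ≤ h → x ∈ H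

lemma abs_mem_iff' {Γ : Type*} [AddCommGroup Γ] [LinearOrder Γ] [IsOrderedAddMonoid Γ] (H : AddSubgroup Γ) (x : Γ) :
    |x| ∈ H ↔ x ∈ H := by
  rcases abs_choice x with h | h <;> rw [h] <;> simp

/-- The archimedean class subgroup generated by γ. -/
def Kgrp {Γ : Type*} [AddCommGroup Γ] [LinearOrder Γ] [IsOrderedAddMonoid Γ] (γ : Γ) : AddSubgroup Γ where
  carrier := {x | ∃ n : ℕ, |x| ≤ n • γ}
  zero_mem' := ⟨0, by simp⟩
  add_mem' := by
    rintro a b ⟨m, hm⟩ ⟨n, hn⟩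
    exact ⟨m + n, (abs_add_le a b).trans (by rw [add_smul]; exact add_le_add hm hn)⟩
  neg_mem' := by
    rintro a ⟨n, hn⟩
    exact ⟨n, by simpa using hn⟩

lemma Kgrp_convex {Γ : Type*} [AddCommGroup Γ] [LinearOrder Γ] [IsOrderedAddMonoid Γ] (γ : Γ) :
    (Kgrp γ).IsConvex := by
  rintro x h ⟨n, hn⟩ hx0 hxh
  refine ⟨n, le_trans ?_ hn⟩
  rw [abs_of_nonneg hx0]
  exact hxh.trans (le_abs_self h)

/-- The subgroup of elements infinitesimal relative to γ. -/
def Lgrp {Γ : Type*} [AddCommGroup Γ] [LinearOrder Γ] [IsOrderedAddMonoid Γ] (γ : Γ) (hγ : 0 < γ) : AddSubgroup Γ where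
  carrier := {x | ∀ n : ℕ, n • |x| < γ}
  zero_mem' := fun n => by simpa using hγ
  add_mem' := by
    intro a b ha hb n
    have h1 : n • |a + b| ≤ n • |a| + n • |b| := by
      rw [← smul_add]
      exact nsmul_le_nsmul_right (abs_add_le a b) n
    rcases le_total |a| |b| with h | h
    · refine h1.trans_lt ?_
      calc n • |a| + n • |b| ≤ n • |b| + n • |b| :=
            add_le_add_left (nsmul_le_nsmul_right h n) _
        _ = (n + n) • |b| := (add_smul n n |b|).symm
        _ < γ := hb (n + n)
    · refine h1.trans_lt ?_
      calc n • |a| + n • |b| ≤ n • |a| + n • |a| :=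
            add_le_add_right (nsmul_le_nsmul_right h n) _
        _ = (n + n) • |a| := (add_smul n n |a|).symm
        _ < γ := ha (n + n)
  neg_mem' := by
    intro a ha n
    simpa using ha n

lemma Lgrp_convex {Γ : Type*} [AddCommGroup Γ] [LinearOrder Γ] [IsOrderedAddMonoid Γ] (γ : Γ) (hγ : 0 < γ) :
    (Lgrp γ hγ).IsConvex := by
  intro x h hh hx0 hxh n
  have : |x| ≤ |h| := by
    rw [abs_of_nonneg hx0]
    exact hxh.trans (le_abs_self h)
  exact (nsmul_le_nsmul_right this n).trans_lt (hh n)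

/-- Two convex subgroups `H ⊊ H'` are adjacent (no convex subgroup strictly in
between) iff there is `γ > 0` with `H = {x | ∀ n, n•|x| < γ}` and
`H' = {x | ∃ n, |x| ≤ n • γ}`. -/
theorem stmt_12 {Γ : Type*} [AddCommGroup Γ] [LinearOrder Γ] [IsOrderedAddMonoid Γ]
    (H H' : AddSubgroup Γ) (hH : H.IsConvex) (hH' : H'.IsConvex)
    (hlt : (H : Set Γ) ⊂ (H' : Set Γ)) :
    (¬ ∃ K : AddSubgroup Γ, K.IsConvex ∧ (H : Set Γ) ⊂ (K : Set Γ) ∧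
        (K : Set Γ) ⊂ (H' : Set Γ)) ↔
      ∃ γ : Γ, 0 < γ ∧ (H : Set Γ) = {x : Γ | ∀ n : ℕ, n • |x| < γ} ∧
        (H' : Set Γ) = {x : Γ | ∃ n : ℕ, |x| ≤ n • γ} := by
  constructor
  · intro hadj
    obtain ⟨γ0, hγ0H', hγ0H⟩ := Set.exists_of_ssubset hlt
    set γ := |γ0| with hγdef
    have hγH' : γ ∈ H' := (abs_mem_iff' H' γ0).mpr hγ0H'
    have hγH : γ ∉ H := fun h => hγ0H ((abs_mem_iff' H γ0).mp h)
    have hγpos : 0 < γ := by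
      rcases (abs_nonneg γ0).lt_or_eq with h | h
      · exact h
      · exfalso; apply hγH; rw [hγdef, ← h]; exact H.zero_mem
    -- H ⊆ Kgrp γ
    have hHK : (H : Set Γ) ⊆ (Kgrp γ : Set Γ) := by
      intro h hh
      by_contra hc
      have : ∀ n : ℕ, ¬ |h| ≤ n • γ := fun n hn => hc ⟨n, hn⟩
      have h1 : 1 • γ < |h| := lt_of_not_ge (this 1)
      rw [one_smul] at h1
      have habs : |h| ∈ H := (abs_mem_iff' H h).mpr hh
      exact hγH (hH γ |h| habs hγpos.le h1.le)
    have hKH' : (Kgrp γ : Set Γ) ⊆ (H' : Set Γ) := by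
      rintro x ⟨n, hn⟩
      have : n • γ ∈ H' := AddSubgroup.nsmul_mem H' hγH' n
      exact (abs_mem_iff' H' x).mp (hH' |x| (n • γ) this (abs_nonneg x) hn)
    have hγK : γ ∈ Kgrp γ := ⟨1, by simp [abs_of_pos hγpos]⟩
    have hHssK : (H : Set Γ) ⊂ (Kgrp γ : Set Γ) :=
      hHK.ssubset_of_ne (fun h => hγH (by rw [← SetLike.mem_coe, h]; exact hγK))
    have hKeq : (Kgrp γ : Set Γ) = (H' : Set Γ) := by
      by_contra hne
      exact hadj ⟨Kgrp γ, Kgrp_convex γ, hHssK, hKH'.ssubset_of_ne hne⟩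
    -- H = Lgrp γ
    have hHL : (H : Set Γ) ⊆ (Lgrp γ hγpos : Set Γ) := by
      intro h hh n
      by_contra hc
      push_neg at hc
      have habs : n • |h| ∈ H := AddSubgroup.nsmul_mem H ((abs_mem_iff' H h).mpr hh) n
      exact hγH (hH γ (n • |h|) habs hγpos.le hc)
    have hLH' : (Lgrp γ hγpos : Set Γ) ⊆ (H' : Set Γ) := by
      intro x hx
      rw [← hKeq]
      exact ⟨1, by simpa using (hx 1).le⟩
    have hγL : γ ∉ Lgrp γ hγpos := fun h => absurd (h 1) (by simp [abs_of_pos hγpos])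
    have hLeq : (H : Set Γ) = (Lgrp γ hγpos : Set Γ) := by
      by_contra hne
      exact hadj ⟨Lgrp γ hγpos, Lgrp_convex γ hγpos, hHL.ssubset_of_ne hne,
        hLH'.ssubset_of_ne (fun h => hγL (by rw [← SetLike.mem_coe, h]; exact hγH'))⟩
    exact ⟨γ, hγpos, hLeq, hKeq.symm⟩
  · rintro ⟨γ, hγ, hHeq, hH'eq⟩ ⟨K, hKconv, hHK, hKH'⟩
    obtain ⟨k, hkK, hkH⟩ := Set.exists_of_ssubset hHK
    have : ∃ n : ℕ, ¬ n • |k| < γ := by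
      by_contra hc
      push_neg at hc
      exact hkH (hHeq ▸ (hc : k ∈ {x : Γ | ∀ n : ℕ, n • |x| < γ}))
    obtain ⟨n, hn⟩ := this
    push_neg at hn
    have hγK : γ ∈ K :=
      hKconv γ (n • |k|) (AddSubgroup.nsmul_mem K ((abs_mem_iff' K k).mpr hkK) n) hγ.le hn
    obtain ⟨h', hh'H', hh'K⟩ := Set.exists_of_ssubset hKH'
    have : h' ∈ {x : Γ | ∃ n : ℕ, |x| ≤ n • γ} := hH'eq ▸ hh'H'
    obtain ⟨m, hm⟩ := this
    have : |h'| ∈ K := hKconv |h'| (m • γ) (AddSubgroup.nsmul_mem K hγK m) (abs_nonneg h') hm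
    exact hh'K ((abs_mem_iff' K h').mp this)
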